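/- If ω is a finite positive Borel measure on [0,1) whose tail ω̂ is doubling (ω̂(r) ≤ C·ω̂((1+r)/2) for all r), then there exist constants C' > 0 and γ > 0 such that ∫₀ᵗ ((1-t)/(1-s))^γ dω(s) ≤ C'·ω̂(t) for all 0 ≤ t < 1. -/

import Mathlib

open MeasureTheory Set
open scoped ENNReal

theorem stmt_2 (ω : Measure ℝ) [IsFiniteMeasure ω] (C : ℝ) (hC : 1 ≤ C)
    (hdoub : ∀ r : ℝ, 0 ≤ r → r < 1 →
      (ω (Ico r 1)).toReal ≤ C * (ω (Ico ((1 + r) / 2) 1)).toReal) :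
    ∃ C' : ℝ, 0 < C' ∧ ∃ γ : ℝ, 0 < γ ∧ ∀ t : ℝ, 0 ≤ t → t < 1 →
      (∫ s in Ico (0 : ℝ) t, ((1 - t) / (1 - s)) ^ γ ∂ω) ≤ C' * (ω (Ico t 1)).toReal := by
  have hC0 : (0:ℝ) < C := lt_of_lt_of_le one_pos hC
  set γ : ℝ := Real.logb 2 C + 1 with hγdef
  have hγpos : 0 < γ := by
    have : 0 ≤ Real.logb 2 C := Real.logb_nonneg one_lt_two hC
    linarith
  have h2γ : (2:ℝ) ^ γ = 2 * C := by
    rw [hγdef, Real.rpow_add two_pos, Real.rpow_logb two_pos (by norm_num) hC0, Real.rpow_one]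
    ring
  set Cn : ℝ≥0∞ := ENNReal.ofReal C with hCn
  have hdoub' : ∀ r : ℝ, 0 ≤ r → r < 1 → ω (Ico r 1) ≤ Cn * ω (Ico ((1 + r) / 2) 1) := by
    intro r h0 h1
    calc ω (Ico r 1) = ENNReal.ofReal (ω (Ico r 1)).toReal :=
          (ENNReal.ofReal_toReal (measure_ne_top ω _)).symm
      _ ≤ ENNReal.ofReal (C * (ω (Ico ((1 + r) / 2) 1)).toReal) :=
          ENNReal.ofReal_le_ofReal (hdoub r h0 h1)
      _ = Cn * ENNReal.ofReal (ω (Ico ((1 + r) / 2) 1)).toReal := ENNReal.ofReal_mul hC0.le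
      _ = Cn * ω (Ico ((1 + r) / 2) 1) := by
          rw [ENNReal.ofReal_toReal (measure_ne_top ω _)]
  have key : ∀ n : ℕ, ∀ r : ℝ, 0 ≤ r → r < 1 →
      ω (Ico r 1) ≤ Cn ^ n * ω (Ico (1 - (1 - r) / 2 ^ n) 1) := by
    intro n
    induction n with
    | zero => intro r h0 h1; simp
    | succ n ih =>
      intro r h0 h1
      have h1r : 0 < 1 - r := by linarith
      have hp : (0:ℝ) < 2 ^ n := by positivity
      have h2n : (1:ℝ) ≤ 2 ^ n := one_le_pow₀ one_le_two
      have hr'0 : 0 ≤ 1 - (1 - r) / 2 ^ n := by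
        have : (1 - r) / 2 ^ n ≤ 1 - r := div_le_self h1r.le h2n
        linarith
      have hr'1 : 1 - (1 - r) / 2 ^ n < 1 := by
        have : 0 < (1 - r) / 2 ^ n := by positivity
        linarith
      have heq : (1 + (1 - (1 - r) / 2 ^ n)) / 2 = 1 - (1 - r) / 2 ^ (n + 1) := by
        field_simp
        ring
      calc ω (Ico r 1) ≤ Cn ^ n * ω (Ico (1 - (1 - r) / 2 ^ n) 1) := ih r h0 h1
        _ ≤ Cn ^ n * (Cn * ω (Ico ((1 + (1 - (1 - r) / 2 ^ n)) / 2) 1)) :=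
            mul_le_mul_right (hdoub' _ hr'0 hr'1) _
        _ = Cn ^ (n + 1) * ω (Ico ((1 + (1 - (1 - r) / 2 ^ n)) / 2) 1) := by ring
        _ = Cn ^ (n + 1) * ω (Ico (1 - (1 - r) / 2 ^ (n + 1)) 1) := by rw [heq]
  refine ⟨2 * C, by linarith, γ, hγpos, ?_⟩
  intro t ht0 ht1
  have h1t : 0 < 1 - t := by linarith
  set a : ℕ → ℝ := fun n => 1 - 2 ^ n * (1 - t) with ha
  set S : ℕ → Set ℝ := fun n => Ioc (a (n + 1)) (a n) ∩ Ico 0 t with hS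
  have hcover : Ico (0:ℝ) t ⊆ ⋃ n, S n := by
    intro s hs
    obtain ⟨hs0, hst⟩ := hs
    have h1s : 0 < 1 - s := by linarith
    have hu1 : (1:ℝ) ≤ (1 - s) / (1 - t) := (one_le_div h1t).2 (by linarith)
    have hu0 : (0:ℝ) < (1 - s) / (1 - t) := lt_of_lt_of_le one_pos hu1
    set u : ℝ := (1 - s) / (1 - t) with hu
    set n : ℕ := ⌊Real.logb 2 u⌋₊ with hn
    have hlog0 : 0 ≤ Real.logb 2 u := Real.logb_nonneg one_lt_two hu1
    have hlow : (2:ℝ) ^ n ≤ u := by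
      calc (2:ℝ) ^ n = (2:ℝ) ^ (n:ℝ) := (Real.rpow_natCast 2 n).symm
        _ ≤ (2:ℝ) ^ Real.logb 2 u :=
            Real.rpow_le_rpow_of_exponent_le one_le_two (Nat.floor_le hlog0)
        _ = u := Real.rpow_logb two_pos (by norm_num) hu0
    have hhigh : u < (2:ℝ) ^ (n + 1) := by
      calc u = (2:ℝ) ^ Real.logb 2 u := (Real.rpow_logb two_pos (by norm_num) hu0).symm
        _ < (2:ℝ) ^ ((n:ℝ) + 1) :=
            Real.rpow_lt_rpow_of_exponent_lt one_lt_two (Nat.lt_floor_add_one _)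
        _ = (2:ℝ) ^ (n + 1) := by
            rw [← Real.rpow_natCast 2 (n + 1)]; push_cast; ring_nf
    have hl : 2 ^ n * (1 - t) ≤ 1 - s := by
      have := (le_div_iff₀ h1t).1 hlow
      linarith
    have hh : 1 - s < 2 ^ (n + 1) * (1 - t) := by
      have := (div_lt_iff₀ h1t).1 hhigh
      linarith
    refine mem_iUnion.2 ⟨n, ⟨⟨?_, ?_⟩, hs0, hst⟩⟩
    · simp only [ha]; linarith
    · simp only [ha]; linarith
  have hann : ∀ n : ℕ, ω (S n) ≤ Cn ^ (n + 1) * ω (Ico t 1) := by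
    intro n
    by_cases hcase : 0 ≤ a (n + 1)
    · have hsub : S n ⊆ Ico (a (n + 1)) 1 := by
        intro s hs
        exact ⟨hs.1.1.le, lt_trans hs.2.2 ht1⟩
      have hlt1 : a (n + 1) < 1 := by
        have : (0:ℝ) < 2 ^ (n + 1) * (1 - t) := by positivity
        simp only [ha]; linarith
      have hk := key (n + 1) (a (n + 1)) hcase hlt1
      have heq : 1 - (1 - a (n + 1)) / 2 ^ (n + 1) = t := by
        have hp : (0:ℝ) < 2 ^ (n + 1) := by positivity
        simp only [ha]
        field_simp
        ring
      rw [heq] at hk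
      exact le_trans (measure_mono hsub) hk
    · push_neg at hcase
      have hsub : S n ⊆ Ico 0 1 := fun s hs => ⟨hs.2.1, lt_trans hs.2.2 ht1⟩
      have hk := key (n + 1) 0 le_rfl one_pos
      have hp : (0:ℝ) < 2 ^ (n + 1) := by positivity
      have ht' : t ≤ 1 - (1 - 0) / 2 ^ (n + 1) := by
        have h1 : (1:ℝ) < 2 ^ (n + 1) * (1 - t) := by
          simp only [ha] at hcase; linarith
        have h2 : (1:ℝ) / 2 ^ (n + 1) < 1 - t := (div_lt_iff₀ hp).2 (by linarith)
        linarith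
      calc ω (S n) ≤ ω (Ico 0 1) := measure_mono hsub
        _ ≤ Cn ^ (n + 1) * ω (Ico (1 - (1 - 0) / 2 ^ (n + 1)) 1) := hk
        _ ≤ Cn ^ (n + 1) * ω (Ico t 1) :=
            mul_le_mul_right (measure_mono (Ico_subset_Ico_left ht')) _
  have hreal : ∀ n : ℕ, ∀ s ∈ S n, ((1 - t) / (1 - s)) ^ γ ≤ ((2:ℝ) ^ n)⁻¹ ^ γ := by
    intro n s hs
    obtain ⟨⟨hs1, hs2⟩, hs3, hs4⟩ := hs
    have h1s : 0 < 1 - s := by linarith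
    have hp : (0:ℝ) < 2 ^ n := by positivity
    have h2 : 2 ^ n * (1 - t) ≤ 1 - s := by
      simp only [ha] at hs2; linarith
    have hb : (1 - t) / (1 - s) ≤ ((2:ℝ) ^ n)⁻¹ := by
      calc (1 - t) / (1 - s) ≤ (1 - t) / (2 ^ n * (1 - t)) :=
            div_le_div_of_nonneg_left h1t.le (by positivity) h2
        _ = ((2:ℝ) ^ n)⁻¹ := by field_simp
    exact Real.rpow_le_rpow (by positivity) hb hγpos.le
  have hcoeff : ∀ n : ℕ, (((2:ℝ) ^ n)⁻¹ ^ γ) * C ^ (n + 1) = C * (2⁻¹ : ℝ) ^ n := by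
    intro n
    have h1 : ((2:ℝ) ^ n)⁻¹ ^ γ = ((2 * C)⁻¹) ^ n := by
      rw [← Real.rpow_natCast (2:ℝ) n, Real.inv_rpow (Real.rpow_nonneg (by norm_num) _),
        ← Real.rpow_mul (by norm_num : (0:ℝ) ≤ 2), mul_comm (n:ℝ) γ,
        Real.rpow_mul (by norm_num : (0:ℝ) ≤ 2), h2γ, Real.rpow_natCast, ← inv_pow]
    rw [h1, mul_inv, mul_pow, pow_succ]
    have h2 : (C⁻¹) ^ n * C ^ n = 1 := by
      rw [← mul_pow, inv_mul_cancel₀ hC0.ne', one_pow]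
    linear_combination (C * (2:ℝ)⁻¹ ^ n) * h2
  have hb_meas : Measurable fun s : ℝ => ((1 - t) / (1 - s)) ^ γ := by
    fun_prop
  have hmain : (∫⁻ s in Ico (0:ℝ) t, ENNReal.ofReal (((1 - t) / (1 - s)) ^ γ) ∂ω)
      ≤ ENNReal.ofReal C * 2 * ω (Ico t 1) := by
    have hSmeas : ∀ n, MeasurableSet (S n) := by
      intro n; simp only [hS]; exact measurableSet_Ioc.inter measurableSet_Ico
    calc (∫⁻ s in Ico (0:ℝ) t, ENNReal.ofReal (((1 - t) / (1 - s)) ^ γ) ∂ω)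
        ≤ ∫⁻ s in ⋃ n, S n, ENNReal.ofReal (((1 - t) / (1 - s)) ^ γ) ∂ω :=
          lintegral_mono_set hcover
      _ ≤ ∑' n, ∫⁻ s in S n, ENNReal.ofReal (((1 - t) / (1 - s)) ^ γ) ∂ω :=
          lintegral_iUnion_le _ _
      _ ≤ ∑' n, ENNReal.ofReal (((2:ℝ) ^ n)⁻¹ ^ γ) * (Cn ^ (n + 1) * ω (Ico t 1)) := by
          apply ENNReal.tsum_le_tsum
          intro n
          calc (∫⁻ s in S n, ENNReal.ofReal (((1 - t) / (1 - s)) ^ γ) ∂ω)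
              ≤ ∫⁻ _ in S n, ENNReal.ofReal (((2:ℝ) ^ n)⁻¹ ^ γ) ∂ω :=
                setLIntegral_mono' (hSmeas n)
                  (fun s hs => ENNReal.ofReal_le_ofReal (hreal n s hs))
            _ = ENNReal.ofReal (((2:ℝ) ^ n)⁻¹ ^ γ) * ω (S n) := setLIntegral_const _ _
            _ ≤ _ := mul_le_mul_right (hann n) _
      _ = ∑' n : ℕ, ENNReal.ofReal C * (2⁻¹ : ℝ≥0∞) ^ n * ω (Ico t 1) := by
          congr 1; funext n
          rw [← mul_assoc]
          congr 1
          rw [hCn, ← ENNReal.ofReal_pow hC0.le, ← ENNReal.ofReal_mul (by positivity),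
            hcoeff n, ENNReal.ofReal_mul hC0.le,
            ENNReal.ofReal_pow (by norm_num : (0:ℝ) ≤ 2⁻¹)]
          congr 2
          rw [ENNReal.ofReal_inv_of_pos two_pos, ENNReal.ofReal_ofNat]
      _ = ENNReal.ofReal C * (∑' n : ℕ, (2⁻¹ : ℝ≥0∞) ^ n) * ω (Ico t 1) := by
          rw [ENNReal.tsum_mul_right, ENNReal.tsum_mul_left]
      _ = ENNReal.ofReal C * 2 * ω (Ico t 1) := by
          rw [ENNReal.tsum_geometric]
          congr 2
          rw [ENNReal.one_sub_inv_two, inv_inv]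
  have hnn : 0 ≤ᵐ[ω.restrict (Ico (0:ℝ) t)] fun s => ((1 - t) / (1 - s)) ^ γ := by
    filter_upwards [ae_restrict_mem measurableSet_Ico] with s hs
    exact Real.rpow_nonneg (div_nonneg h1t.le (by linarith [hs.2])) γ
  rw [integral_eq_lintegral_of_nonneg_ae hnn hb_meas.aestronglyMeasurable]
  have hne : ENNReal.ofReal C * 2 * ω (Ico t 1) ≠ ⊤ :=
    ENNReal.mul_ne_top (ENNReal.mul_ne_top ENNReal.ofReal_ne_top (by norm_num))
      (measure_ne_top ω _)
  calc (∫⁻ s in Ico (0:ℝ) t, ENNReal.ofReal (((1 - t) / (1 - s)) ^ γ) ∂ω).toReal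
      ≤ (ENNReal.ofReal C * 2 * ω (Ico t 1)).toReal := ENNReal.toReal_mono hne hmain
    _ = 2 * C * (ω (Ico t 1)).toReal := by
        rw [ENNReal.toReal_mul, ENNReal.toReal_mul, ENNReal.toReal_ofReal hC0.le,
          ENNReal.toReal_ofNat]
        ring
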